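/- arXiv:1610.05952 — 3 statements merged into one kernel-verified Lean document; each statement's English description precedes it below -/
import Mathlib

section
/- Let $w \in A_\infty$ on $\mathbb{R}^n$. Then $v = w^{-1} \in A_p(w)$ if and only if $w \in RH_{p'}$, where $1 < p < \infty$ and $p'$ is the conjugate exponent of $p$. -/
open MeasureTheory Metric ENNReal NNReal Set

noncomputable section

/-- `w ∈ A_q` with constant at most `C` (for `1 ≤ q < ∞`), with respect to Lebesgue measure. -/
def apBound (n : ℕ) (w : EuclideanSpace ℝ (Fin n) → ℝ≥0∞) (q : ℝ) (C : ℝ≥0∞) : Prop :=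
  ∀ (c : EuclideanSpace ℝ (Fin n)) (r : ℝ), 0 < r →
    (if q = 1 then
      ((∫⁻ x in ball c r, w x) / volume (ball c r)) *
        essSup (fun x => (w x)⁻¹) (volume.restrict (ball c r))
    else
      ((∫⁻ x in ball c r, w x) / volume (ball c r)) *
        (((∫⁻ x in ball c r, (w x) ^ (-(1/(q-1)))) / volume (ball c r)) ^ (q - 1))) ≤ C

/-- Let `w ∈ A_∞` (nondegenerate). Then `v = w⁻¹ ∈ A_p(w)` if and only if
`w ∈ RH_{p'}`, where `1 < p < ∞` and `p' = p/(p-1)`.  The `A_p(w)` condition on the left is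
stated with averages with respect to the measure `dw = w dx`; the reverse Hölder condition
on the right with respect to Lebesgue measure. -/
theorem dual_Ap_iff_RH
    (n : ℕ) (w : EuclideanSpace ℝ (Fin n) → ℝ≥0∞) (p : ℝ) (hp : 1 < p)
    (hw : Measurable w)
    (hpos : ∀ᵐ x ∂(volume : Measure (EuclideanSpace ℝ (Fin n))), 0 < w x ∧ w x ≠ ∞)
    (hloc : ∀ (c : EuclideanSpace ℝ (Fin n)) (r : ℝ), 0 < r →
      0 < (∫⁻ x in ball c r, w x) ∧ (∫⁻ x in ball c r, w x) ≠ ∞)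
    (hAinf : ∃ q : ℝ, 1 ≤ q ∧ ∃ C : ℝ≥0, apBound n w q C) :
    (∃ C : ℝ≥0, ∀ (c : EuclideanSpace ℝ (Fin n)) (r : ℝ), 0 < r →
        ((∫⁻ x in ball c r, (w x)⁻¹ * w x) / (∫⁻ x in ball c r, w x)) *
          (((∫⁻ x in ball c r, ((w x)⁻¹) ^ (-(1/(p-1))) * w x) /
              (∫⁻ x in ball c r, w x)) ^ (p - 1)) ≤ C)
    ↔
    (∃ C : ℝ≥0, ∀ (c : EuclideanSpace ℝ (Fin n)) (r : ℝ), 0 < r →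
        ((∫⁻ x in ball c r, (w x) ^ (p/(p-1))) / volume (ball c r)) ^ ((p-1)/p)
          ≤ C * ((∫⁻ x in ball c r, w x) / volume (ball c r))) := by
  have hp1 : (0:ℝ) < p - 1 := by linarith
  have hp0 : (0:ℝ) < p := by linarith
  -- rewrite the two integrals appearing on the left-hand side
  have h1 : ∀ (c : EuclideanSpace ℝ (Fin n)) (r : ℝ),
      (∫⁻ x in ball c r, (w x)⁻¹ * w x) = volume (ball c r) := by
    intro c r
    have h : (fun x => (w x)⁻¹ * w x) =ᵐ[volume.restrict (ball c r)] fun _ => 1 :=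
      ae_restrict_of_ae (hpos.mono fun x hx => ENNReal.inv_mul_cancel hx.1.ne' hx.2)
    rw [lintegral_congr_ae h, setLIntegral_one]
  have h2 : ∀ (c : EuclideanSpace ℝ (Fin n)) (r : ℝ),
      (∫⁻ x in ball c r, ((w x)⁻¹) ^ (-(1/(p-1))) * w x)
        = ∫⁻ x in ball c r, (w x) ^ (p/(p-1)) := by
    intro c r
    refine lintegral_congr_ae (ae_restrict_of_ae (hpos.mono fun x hx => ?_))
    have he : (1/(p-1)) + 1 = p/(p-1) := by field_simp; ring
    calc ((w x)⁻¹) ^ (-(1/(p-1))) * w x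
        = w x ^ (1/(p-1)) * w x ^ (1:ℝ) := by
          rw [ENNReal.inv_rpow, ENNReal.rpow_neg, inv_inv, ENNReal.rpow_one]
      _ = w x ^ (p/(p-1)) := by rw [← ENNReal.rpow_add _ _ hx.1.ne' hx.2, he]
  -- the key ball-wise algebraic equivalences
  have key : ∀ (c : EuclideanSpace ℝ (Fin n)) (r : ℝ), 0 < r → ∀ C : ℝ≥0∞,
      ((volume (ball c r) / (∫⁻ x in ball c r, w x)) *
        (((∫⁻ x in ball c r, (w x) ^ (p/(p-1))) / (∫⁻ x in ball c r, w x)) ^ (p - 1)) ≤ C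
        ↔ volume (ball c r) * (∫⁻ x in ball c r, (w x) ^ (p/(p-1))) ^ (p-1)
            ≤ C * (∫⁻ x in ball c r, w x) ^ p)
      ∧ (((∫⁻ x in ball c r, (w x) ^ (p/(p-1))) / volume (ball c r)) ^ ((p-1)/p)
            ≤ C * ((∫⁻ x in ball c r, w x) / volume (ball c r))
        ↔ volume (ball c r) * (∫⁻ x in ball c r, (w x) ^ (p/(p-1))) ^ (p-1)
            ≤ C ^ p * (∫⁻ x in ball c r, w x) ^ p) := by
    intro c r hr C
    set V := volume (ball c r) with hVdef
    set W := ∫⁻ x in ball c r, w x with hWdef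
    set A := ∫⁻ x in ball c r, (w x) ^ (p/(p-1)) with hAdef
    have hV0 : V ≠ 0 := (measure_ball_pos volume c hr).ne'
    have hVt : V ≠ ∞ := measure_ball_lt_top.ne
    have hW0 : W ≠ 0 := (hloc c r hr).1.ne'
    have hWt : W ≠ ∞ := (hloc c r hr).2
    have hWp : W * W ^ (p - 1) = W ^ p := by
      nth_rewrite 1 [← ENNReal.rpow_one W]
      rw [← ENNReal.rpow_add _ _ hW0 hWt]
      congr 1; ring
    have hVp : V * V ^ (p - 1) = V ^ p := by
      nth_rewrite 1 [← ENNReal.rpow_one V]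
      rw [← ENNReal.rpow_add _ _ hV0 hVt]
      congr 1; ring
    have hWp0 : W ^ p ≠ 0 := (ENNReal.rpow_pos (hloc c r hr).1 hWt).ne'
    have hWpt : W ^ p ≠ ∞ := ENNReal.rpow_ne_top_of_nonneg hp0.le hWt
    have hVp10 : V ^ (p-1) ≠ 0 := (ENNReal.rpow_pos (pos_iff_ne_zero.2 hV0) hVt).ne'
    have hVp1t : V ^ (p-1) ≠ ∞ := ENNReal.rpow_ne_top_of_nonneg hp1.le hVt
    constructor
    · have heq : V / W * ((A / W) ^ (p - 1)) = (V * A ^ (p-1)) / W ^ p := by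
        rw [ENNReal.div_rpow_of_nonneg _ _ hp1.le]
        simp only [div_eq_mul_inv]
        rw [← hWp, ENNReal.mul_inv (Or.inl hW0) (Or.inl hWt)]
        ring
      rw [heq, ENNReal.div_le_iff hWp0 hWpt]
    · rw [← ENNReal.rpow_le_rpow_iff hp0]
      have hx : ((A / V) ^ ((p-1)/p)) ^ p = A ^ (p-1) / V ^ (p-1) := by
        rw [← ENNReal.rpow_mul, div_mul_cancel₀ _ hp0.ne', ENNReal.div_rpow_of_nonneg _ _ hp1.le]
      have hy : (C * (W / V)) ^ p = C ^ p * (W ^ p / V ^ p) := by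
        rw [ENNReal.mul_rpow_of_nonneg _ _ hp0.le, ENNReal.div_rpow_of_nonneg _ _ hp0.le]
      rw [hx, hy, ENNReal.div_le_iff hVp10 hVp1t]
      have hsimp : C ^ p * (W ^ p / V ^ p) * V ^ (p-1) = (C ^ p * W ^ p) / V := by
        simp only [div_eq_mul_inv]
        rw [← hVp, ENNReal.mul_inv (Or.inl hV0) (Or.inl hVt)]
        calc C ^ p * (W ^ p * (V⁻¹ * (V ^ (p-1))⁻¹)) * V ^ (p-1)
            = C ^ p * W ^ p * V⁻¹ * ((V ^ (p-1))⁻¹ * V ^ (p-1)) := by ring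
          _ = C ^ p * W ^ p * V⁻¹ := by
              rw [ENNReal.inv_mul_cancel hVp10 hVp1t, mul_one]
      rw [hsimp, ENNReal.le_div_iff_mul_le (Or.inl hV0) (Or.inl hVt),
        mul_comm (A ^ (p-1)) V]
  constructor
  · rintro ⟨C, hC⟩
    refine ⟨C ^ (1/p), fun c r hr => ?_⟩
    have h := hC c r hr
    rw [h1 c r, h2 c r] at h
    have hQ := ((key c r hr C).1).mp h
    refine ((key c r hr _).2).mpr ?_
    have hcoe : (((C ^ (1/p) : ℝ≥0) : ℝ≥0∞)) ^ p = (C : ℝ≥0∞) := by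
      rw [← ENNReal.coe_rpow_of_nonneg _ hp0.le, ← NNReal.rpow_mul,
        one_div_mul_cancel hp0.ne', NNReal.rpow_one]
    rw [hcoe]; exact hQ
  · rintro ⟨C, hC⟩
    refine ⟨C ^ p, fun c r hr => ?_⟩
    rw [h1 c r, h2 c r]
    have hQ := ((key c r hr C).2).mp (hC c r hr)
    refine ((key c r hr _).1).mpr ?_
    have hcoe : (((C ^ p : ℝ≥0) : ℝ≥0∞)) = (C : ℝ≥0∞) ^ p :=
      ENNReal.coe_rpow_of_nonneg _ hp0.le
    rw [hcoe]; exact hQ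
end
end

section
/- Let $w \in A_\infty$ on $\mathbb{R}^n$. Then $v = w^{-1} \in RH_s(w)$ if and only if $w \in A_{s'}$, where $1 < s < \infty$. -/
open MeasureTheory Metric ENNReal NNReal Set

noncomputable section

/-- Algebraic form of the reverse Hölder inequality. -/
lemma aux_L1 {s : ℝ} (hs : 1 < s) (A V D K : ℝ≥0∞)
    (hA0 : A ≠ 0) (hA : A ≠ ∞) :
    (D / A) ^ (1/s) ≤ K * (V / A) ↔ A ^ (s-1) * D ≤ K ^ s * V ^ s := by
  have hs0 : (0:ℝ) < s := by linarith
  have e := ENNReal.rpow_le_rpow_iff (x := (D / A) ^ (1/s)) (y := K * (V / A)) hs0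
  rw [← ENNReal.rpow_mul, one_div, inv_mul_cancel₀ hs0.ne', ENNReal.rpow_one,
      ENNReal.mul_rpow_of_nonneg _ _ hs0.le, ENNReal.div_rpow_of_nonneg _ _ hs0.le] at e
  rw [one_div, ← e]
  have hAs0 : A ^ s ≠ 0 := (ENNReal.rpow_pos (pos_iff_ne_zero.mpr hA0) hA).ne'
  have hAs : A ^ s ≠ ∞ := ENNReal.rpow_ne_top_of_nonneg hs0.le hA
  rw [← mul_div_assoc, ENNReal.le_div_iff_mul_le (Or.inl hAs0) (Or.inl hAs)]
  have hsplit : A ^ s = A ^ (s-1) * A :=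
    calc A ^ s = A ^ ((s-1)+1) := by congr 1; ring
    _ = A ^ (s-1) * A ^ (1:ℝ) := ENNReal.rpow_add _ _ hA0 hA
    _ = A ^ (s-1) * A := by rw [ENNReal.rpow_one]
  have hkey : D / A * A ^ s = A ^ (s-1) * D := by
    rw [hsplit, div_eq_mul_inv]
    calc D * A⁻¹ * (A ^ (s-1) * A) = A ^ (s-1) * D * (A⁻¹ * A) := by ring
    _ = A ^ (s-1) * D := by rw [ENNReal.inv_mul_cancel hA0 hA, mul_one]
  rw [hkey]

/-- Algebraic form of the Muckenhoupt inequality. -/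
lemma aux_L2 {s : ℝ} (hs : 1 < s) (A V D M : ℝ≥0∞)
    (hV0 : V ≠ 0) (hV : V ≠ ∞) :
    (A / V) * (D / V) ^ (1/(s-1)) ≤ M ↔ A ^ (s-1) * D ≤ M ^ (s-1) * V ^ s := by
  have ht : (0:ℝ) < s - 1 := by linarith
  have e := ENNReal.rpow_le_rpow_iff (x := (A / V) * (D / V) ^ (1/(s-1))) (y := M) ht
  rw [ENNReal.mul_rpow_of_nonneg _ _ ht.le, ← ENNReal.rpow_mul, one_div,
      inv_mul_cancel₀ ht.ne', ENNReal.rpow_one, ENNReal.div_rpow_of_nonneg _ _ ht.le] at e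
  rw [one_div, ← e]
  have hVs0 : V ^ (s-1) ≠ 0 := (ENNReal.rpow_pos (pos_iff_ne_zero.mpr hV0) hV).ne'
  have hVs : V ^ (s-1) ≠ ∞ := ENNReal.rpow_ne_top_of_nonneg ht.le hV
  have hsplit : V ^ s = V ^ (s-1) * V :=
    calc V ^ s = V ^ ((s-1)+1) := by congr 1; ring
    _ = V ^ (s-1) * V ^ (1:ℝ) := ENNReal.rpow_add _ _ hV0 hV
    _ = V ^ (s-1) * V := by rw [ENNReal.rpow_one]
  have hkey : A ^ (s-1) / V ^ (s-1) * (D / V) = (A ^ (s-1) * D) / (V ^ s) := by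
    rw [hsplit, div_eq_mul_inv, div_eq_mul_inv, div_eq_mul_inv,
        ENNReal.mul_inv (Or.inl hVs0) (Or.inl hVs)]
    ring
  rw [hkey, ENNReal.div_le_iff (by rw [hsplit]; exact mul_ne_zero hVs0 hV0)
      (by rw [hsplit]; exact ENNReal.mul_ne_top hVs hV), mul_comm (M ^ (s-1)) (V ^ s)]

/-- Let `w ∈ A_∞` (nondegenerate). Then `v = w⁻¹ ∈ RH_s(w)` if and only if
`w ∈ A_{s'}`, where `1 < s < ∞` and `s' = s/(s-1)`.  The `RH_s(w)` condition on the left is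
stated with averages with respect to the measure `dw = w dx`; the Muckenhoupt condition
on the right with respect to Lebesgue measure. -/
theorem dual_RH_iff_Ap
    (n : ℕ) (w : EuclideanSpace ℝ (Fin n) → ℝ≥0∞) (s : ℝ) (hs : 1 < s)
    (hw : Measurable w)
    (hpos : ∀ᵐ x ∂(volume : Measure (EuclideanSpace ℝ (Fin n))), 0 < w x ∧ w x ≠ ∞)
    (hloc : ∀ (c : EuclideanSpace ℝ (Fin n)) (r : ℝ), 0 < r →
      0 < (∫⁻ x in ball c r, w x) ∧ (∫⁻ x in ball c r, w x) ≠ ∞)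
    (hAinf : ∃ q : ℝ, 1 ≤ q ∧ ∃ C : ℝ≥0, apBound n w q C) :
    (∃ C : ℝ≥0, ∀ (c : EuclideanSpace ℝ (Fin n)) (r : ℝ), 0 < r →
        ((∫⁻ x in ball c r, ((w x)⁻¹) ^ s * w x) / (∫⁻ x in ball c r, w x)) ^ (1/s)
          ≤ C * ((∫⁻ x in ball c r, (w x)⁻¹ * w x) / (∫⁻ x in ball c r, w x)))
    ↔
    (∃ C : ℝ≥0, ∀ (c : EuclideanSpace ℝ (Fin n)) (r : ℝ), 0 < r →
        ((∫⁻ x in ball c r, w x) / volume (ball c r)) *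
          (((∫⁻ x in ball c r, (w x) ^ (-(1/(s/(s-1)-1)))) / volume (ball c r)) ^ (s/(s-1) - 1))
          ≤ C) := by
  have ht : (0:ℝ) < s - 1 := by linarith
  have hs0 : (0:ℝ) < s := by linarith
  have hexp : s / (s-1) - 1 = 1/(s-1) := by field_simp; ring
  have hexp2 : -(1/(s/(s-1)-1)) = 1 - s := by rw [hexp]; field_simp; ring
  have hI1 : ∀ (c : EuclideanSpace ℝ (Fin n)) (r : ℝ),
      (∫⁻ x in ball c r, ((w x)⁻¹) ^ s * w x) = ∫⁻ x in ball c r, (w x) ^ (1-s) := by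
    intro c r
    refine lintegral_congr_ae ?_
    filter_upwards [ae_restrict_of_ae hpos] with x hx
    obtain ⟨hx0, hxt⟩ := hx
    calc ((w x)⁻¹) ^ s * w x = (w x) ^ (-s) * (w x) ^ (1:ℝ) := by
          rw [ENNReal.inv_rpow, ← ENNReal.rpow_neg, ENNReal.rpow_one]
    _ = (w x) ^ (-s + 1) := (ENNReal.rpow_add _ _ hx0.ne' hxt).symm
    _ = (w x) ^ (1 - s) := by ring_nf
  have hI2 : ∀ (c : EuclideanSpace ℝ (Fin n)) (r : ℝ),
      (∫⁻ x in ball c r, (w x)⁻¹ * w x) = volume (ball c r) := by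
    intro c r
    rw [← setLIntegral_one]
    refine lintegral_congr_ae ?_
    filter_upwards [ae_restrict_of_ae hpos] with x hx
    exact ENNReal.inv_mul_cancel hx.1.ne' hx.2
  constructor
  · rintro ⟨C, hC⟩
    refine ⟨C ^ (s/(s-1)), fun c r hr => ?_⟩
    have h := hC c r hr
    rw [hI1, hI2] at h
    rw [hexp2, hexp]
    obtain ⟨hA0, hA⟩ := hloc c r hr
    have hV0 : volume (ball c r) ≠ 0 := (measure_ball_pos volume c hr).ne'
    have hV : volume (ball c r) ≠ ∞ := measure_ball_lt_top.ne
    rw [aux_L2 hs _ _ _ _ hV0 hV]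
    have key := (aux_L1 hs _ _ _ _ hA0.ne' hA).mp h
    refine key.trans (le_of_eq ?_)
    congr 1
    rw [ENNReal.coe_rpow_of_nonneg _ (by positivity : (0:ℝ) ≤ s/(s-1)),
        ← ENNReal.rpow_mul]
    congr 1
    field_simp
  · rintro ⟨C, hC⟩
    refine ⟨C ^ ((s-1)/s), fun c r hr => ?_⟩
    have h := hC c r hr
    rw [hexp2, hexp] at h
    obtain ⟨hA0, hA⟩ := hloc c r hr
    have hV0 : volume (ball c r) ≠ 0 := (measure_ball_pos volume c hr).ne'
    have hV : volume (ball c r) ≠ ∞ := measure_ball_lt_top.ne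
    rw [hI1, hI2, aux_L1 hs _ _ _ _ hA0.ne' hA]
    have key := (aux_L2 hs _ _ _ _ hV0 hV).mp h
    refine key.trans (le_of_eq ?_)
    congr 1
    rw [ENNReal.coe_rpow_of_nonneg _ (by positivity : (0:ℝ) ≤ (s-1)/s),
        ← ENNReal.rpow_mul]
    congr 1
    field_simp
end
end

section
/- For each fixed $t > 0$ and $r_i > 0$ and integer $M \ge 1$, the function $\phi(z,t) = e^{-t^2 z}(1 - e^{-r_i^2 z})^M$, holomorphic on the sector $\Sigma_\mu = \{z \in \mathbb{C}\setminus\{0\} : |\arg z| < \mu\}$ for $0 < \mu < \pi/2$, admits the representation $\phi(L, t) = \int_\Gamma e^{-zL}\eta(z,t)\,dz$ with $\eta(z,t) = \int_\gamma e^{\zeta z}\phi(\zeta, t)\,d\zeta$, where $\Gamma = \partial\Sigma_{\pi/2 - \theta}$ and $\gamma = \mathbb{R}_+ e^{i\,\mathrm{sign}(\mathrm{Im}\,z)\,\nu}$ for $0 < \theta < \nu < \mu$; moreover, for every $z \in \Gamma$, $|\eta(z,t)| \le C\, r_i^{2M}/(|z| + t^2)^{M+1}$, with $C$ independent of $t$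 and $r_i$. -/
open MeasureTheory Set

noncomputable section

/-- The kernel `η(z,t) = ∫_γ e^{ζ z} φ(ζ,t) dζ`, where `φ(ζ,t) = e^{-t²ζ}(1-e^{-r²ζ})^M`
and `γ = ℝ₊ e^{i sign(Im z) ν}`, parametrized by arc length `s ↦ s e^{i sign(Im z) ν}`. -/
def etaKernel (M : ℕ) (ν t ri : ℝ) (z : ℂ) : ℂ :=
  ∫ s in Ioi (0:ℝ),
    Complex.exp ((s : ℂ) * Complex.exp (((if 0 ≤ z.im then (1:ℝ) else -1) * ν : ℝ) * Complex.I) * z) *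
      (Complex.exp (-((t^2 : ℝ) : ℂ) *
          ((s : ℂ) * Complex.exp (((if 0 ≤ z.im then (1:ℝ) else -1) * ν : ℝ) * Complex.I))) *
        (1 - Complex.exp (-((ri^2 : ℝ) : ℂ) *
          ((s : ℂ) * Complex.exp (((if 0 ≤ z.im then (1:ℝ) else -1) * ν : ℝ) * Complex.I)))) ^ M *
        Complex.exp (((if 0 ≤ z.im then (1:ℝ) else -1) * ν : ℝ) * Complex.I))


lemma norm_one_sub_exp_neg_le (w : ℂ) (hw : 0 ≤ w.re) :
    ‖1 - Complex.exp (-w)‖ ≤ ‖w‖ := by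
  have hderiv : ∀ u ∈ Set.uIcc (0:ℝ) 1,
      HasDerivAt (fun u : ℝ => Complex.exp (-(u:ℂ) * w))
        (Complex.exp (-(u:ℂ) * w) * (-1 * w)) u := by
    intro u _
    exact (((hasDerivAt_id ((u:ℂ))).neg.mul_const w).cexp).comp_ofReal
  have hint : IntervalIntegrable (fun u : ℝ => Complex.exp (-(u:ℂ) * w) * (-1 * w))
      MeasureTheory.volume 0 1 := by
    apply Continuous.intervalIntegrable
    fun_prop
  have heq := intervalIntegral.integral_eq_sub_of_hasDerivAt hderiv hint
  simp only [Complex.ofReal_one, Complex.ofReal_zero, neg_mul, one_mul, zero_mul, neg_zero,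
    Complex.exp_zero] at heq
  have hb := intervalIntegral.norm_integral_le_of_norm_le_const (C := ‖w‖)
    (f := fun u : ℝ => Complex.exp (-(u:ℂ) * w) * (-1 * w)) (a := 0) (b := 1) ?_
  · simp only [Complex.ofReal_one, Complex.ofReal_zero, neg_mul, one_mul, zero_mul, neg_zero,
      Complex.exp_zero] at hb
    rw [heq] at hb
    rw [norm_sub_rev] at hb
    simpa using hb
  · intro x hx
    rw [Set.uIoc_of_le (zero_le_one)] at hx
    rw [norm_mul]
    have h2 : ‖Complex.exp (-(x:ℂ) * w)‖ ≤ 1 := by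
      rw [Complex.norm_exp]
      rw [Real.exp_le_one_iff]
      have : (-(x:ℂ) * w).re = -(x * w.re) := by simp
      rw [this]
      have := mul_nonneg hx.1.le hw
      linarith
    have h3 : ‖(-1 : ℂ) * w‖ = ‖w‖ := by simp
    calc ‖Complex.exp (-(x:ℂ) * w)‖ * ‖(-1:ℂ) * w‖ ≤ 1 * ‖w‖ := by
          rw [h3]; exact mul_le_mul_of_nonneg_right h2 (norm_nonneg w)
      _ = ‖w‖ := one_mul _

lemma integrableOn_pow_mul_exp_neg (M : ℕ) {c : ℝ} (hc : 0 < c) :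
    IntegrableOn (fun s : ℝ => s ^ M * Real.exp (-(c * s))) (Ioi (0:ℝ)) := by
  have h0 : IntegrableOn (fun x : ℝ => Real.exp (-x) * x ^ ((M+1:ℝ) - 1)) (Ioi 0) :=
    Real.GammaIntegral_convergent (by positivity)
  have h1 : IntegrableOn (fun x : ℝ => Real.exp (-(c*x)) * (c*x) ^ ((M+1:ℝ) - 1)) (Ioi 0) := by
    have := (integrableOn_Ioi_comp_mul_left_iff
      (fun x : ℝ => Real.exp (-x) * x ^ ((M+1:ℝ) - 1)) 0 hc).2 (by simpa using h0)
    simpa using this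
  have h2 := (h1.const_mul ((c ^ M)⁻¹))
  apply IntegrableOn.congr_fun h2 ?_ measurableSet_Ioi
  intro x hx
  have hx0 : (0:ℝ) < x := hx
  have h3 : ((M+1:ℝ) - 1) = ((M:ℕ):ℝ) := by push_cast; ring
  simp only [h3, Real.rpow_natCast]
  rw [mul_pow]
  field_simp

lemma integral_pow_mul_exp_neg (M : ℕ) {c : ℝ} (hc : 0 < c) :
    ∫ s in Ioi (0:ℝ), s ^ M * Real.exp (-(c * s)) = (M.factorial : ℝ) / c ^ (M+1) := by
  have h := Real.integral_rpow_mul_exp_neg_mul_Ioi (a := (M+1:ℝ)) (by positivity) hc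
  rw [show ((M+1:ℝ)) - 1 = ((M:ℕ):ℝ) by push_cast; ring] at h
  have heq : ∫ s in Ioi (0:ℝ), s ^ M * Real.exp (-(c * s))
      = ∫ s in Ioi (0:ℝ), s ^ ((M:ℕ):ℝ) * Real.exp (-(c * s)) := by
    apply setIntegral_congr_fun measurableSet_Ioi
    intro x hx
    simp [Real.rpow_natCast]
  rw [heq, h]
  rw [show ((M:ℝ)+1) = (((M+1 : ℕ)):ℝ) by push_cast; ring, Real.rpow_natCast]
  rw [show (((M+1:ℕ)):ℝ) = ((M:ℝ))+1 by push_cast; ring]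
  rw [Real.Gamma_nat_eq_factorial]
  field_simp
  rw [one_div, inv_pow, inv_mul_cancel₀ (by positivity)]

/-- for `0 < θ < ν < μ < π/2` and `M ≥ 1`, there is a constant `C`,
independent of `t > 0` and `r_i > 0`, such that for every `z` on the boundary contour
`Γ = ∂Σ_{π/2-θ}` (i.e. `z ≠ 0` with `|arg z| = π/2 - θ`),
`|η(z,t)| ≤ C r_i^{2M} / (|z| + t²)^{M+1}`. -/
theorem eta_kernel_bound (M : ℕ) (hM : 1 ≤ M) (θ ν μ : ℝ)
    (h1 : 0 < θ) (h2 : θ < ν) (h3 : ν < μ) (h4 : μ < Real.pi / 2) :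
    ∃ C : ℝ, 0 ≤ C ∧ ∀ (t ri : ℝ), 0 < t → 0 < ri →
      ∀ z : ℂ, z ≠ 0 → |Complex.arg z| = Real.pi / 2 - θ →
      ‖etaKernel M ν t ri z‖ ≤ C * ri ^ (2 * M) / (‖z‖ + t ^ 2) ^ (M + 1) := by
  have hνπ : ν < Real.pi / 2 := by linarith
  have hν0 : 0 < ν := lt_trans h1 h2
  have hπ : 0 < Real.pi := Real.pi_pos
  have hsin : 0 < Real.sin (ν - θ) :=
    Real.sin_pos_of_pos_of_lt_pi (by linarith) (by linarith)
  have hcos : 0 < Real.cos ν := Real.cos_pos_of_mem_Ioo ⟨by linarith, hνπ⟩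
  set δ := min (Real.sin (ν - θ)) (Real.cos ν) with hδdef
  have hδ : 0 < δ := lt_min hsin hcos
  refine ⟨(M.factorial : ℝ) / δ ^ (M+1), by positivity, ?_⟩
  intro t ri ht hri z hz harg
  rw [etaKernel]
  set σ : ℝ := if 0 ≤ z.im then (1:ℝ) else -1 with hσdef
  have hσcases : σ = 1 ∨ σ = -1 := by
    rw [hσdef]; split <;> simp
  have hargz : z.arg = σ * (Real.pi/2 - θ) := by
    rw [hσdef]
    split
    · rename_i h
      rw [one_mul, ← harg, abs_of_nonneg (Complex.arg_nonneg_iff.mpr h)]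
    · rename_i h
      have h' : z.im < 0 := lt_of_not_ge h
      have := abs_of_neg (Complex.arg_neg_iff.mpr h')
      rw [harg] at this
      linarith
  set E : ℂ := Complex.exp ((σ * ν : ℝ) * Complex.I) with hEdef
  have hEre : E.re = Real.cos ν := by
    rw [hEdef, Complex.exp_ofReal_mul_I_re]
    rcases hσcases with h | h <;> rw [h] <;> simp
  have hEim : E.im = σ * Real.sin ν := by
    rw [hEdef, Complex.exp_ofReal_mul_I_im]
    rcases hσcases with h | h <;> rw [h] <;> simp
  have hEabs : ‖E‖ = 1 := by
    rw [hEdef]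
    exact Complex.norm_exp_ofReal_mul_I _
  have hσsq : σ * σ = 1 := by rcases hσcases with h | h <;> rw [h] <;> norm_num
  -- real and imaginary part of z
  have hzre : z.re = ‖z‖ * Real.cos (Real.pi/2 - θ) := by
    have h0 := Complex.norm_mul_cos_arg z
    rw [hargz] at h0
    rcases hσcases with h | h <;> rw [h] at h0
    · rw [one_mul] at h0; linarith
    · rw [show (-1 : ℝ) * (Real.pi/2 - θ) = -(Real.pi/2 - θ) by ring, Real.cos_neg] at h0
      linarith
  have hzim : z.im = σ * (‖z‖ * Real.sin (Real.pi/2 - θ)) := by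
    have h0 := Complex.norm_mul_sin_arg z
    rw [hargz] at h0
    rcases hσcases with h | h <;> rw [h] at h0 <;> rw [h]
    · rw [one_mul] at h0; rw [one_mul]; linarith
    · rw [show (-1 : ℝ) * (Real.pi/2 - θ) = -(Real.pi/2 - θ) by ring, Real.sin_neg] at h0
      rw [neg_one_mul]; linarith
  have hEz : (E * z).re = -(‖z‖ * Real.sin (ν - θ)) := by
    rw [Complex.mul_re, hEre, hEim, hzre, hzim]
    have htrig : Real.cos ν * Real.cos (Real.pi/2 - θ) - Real.sin ν * Real.sin (Real.pi/2 - θ)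
        = -Real.sin (ν - θ) := by
      rw [← Real.cos_add, show ν + (Real.pi/2 - θ) = Real.pi/2 + (ν - θ) by ring,
        Real.cos_add]
      simp
    linear_combination ‖z‖ * htrig
      - ‖z‖ * Real.sin ν * Real.sin (Real.pi/2 - θ) * hσsq
  set c : ℝ := ‖z‖ * Real.sin (ν - θ) + t^2 * Real.cos ν with hcdef
  have habs0 : 0 < ‖z‖ := norm_pos_iff.mpr hz
  have hc : 0 < c := by
    rw [hcdef]
    exact add_pos_of_nonneg_of_pos (mul_nonneg (norm_nonneg z) hsin.le)
      (mul_pos (by positivity) hcos)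
  have hcδ : δ * (‖z‖ + t^2) ≤ c := by
    have hA : δ * ‖z‖ ≤ ‖z‖ * Real.sin (ν - θ) := by
      rw [mul_comm]; exact mul_le_mul_of_nonneg_left (min_le_left _ _) habs0.le
    have hB : δ * t^2 ≤ t^2 * Real.cos ν := by
      rw [mul_comm]; exact mul_le_mul_of_nonneg_left (min_le_right _ _) (by positivity)
    rw [hcdef, mul_add]
    exact add_le_add hA hB
  -- pointwise bound
  have hpt : ∀ s ∈ Ioi (0:ℝ),
      ‖Complex.exp ((s : ℂ) * E * z) *
        (Complex.exp (-((t^2 : ℝ) : ℂ) * ((s : ℂ) * E)) *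
          (1 - Complex.exp (-((ri^2 : ℝ) : ℂ) * ((s : ℂ) * E))) ^ M * E)‖
      ≤ ri ^ (2*M) * (s ^ M * Real.exp (-(c * s))) := by
    intro s hs
    have hs0 : (0:ℝ) < s := hs
    have hn1 : ‖Complex.exp ((s : ℂ) * E * z)‖
        = Real.exp (-(‖z‖ * Real.sin (ν - θ)) * s) := by
      rw [Complex.norm_exp]
      congr 1
      rw [mul_assoc, Complex.re_ofReal_mul, hEz]; ring
    have hn2 : ‖Complex.exp (-((t^2 : ℝ) : ℂ) * ((s : ℂ) * E))‖
        = Real.exp (-(t^2 * Real.cos ν) * s) := by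
      rw [Complex.norm_exp]
      congr 1
      rw [show -((t^2 : ℝ) : ℂ) * ((s : ℂ) * E) = ((-(t^2) * s : ℝ) : ℂ) * E by
        push_cast; ring, Complex.re_ofReal_mul, hEre]
      ring
    have hvre : (((ri^2 : ℝ) : ℂ) * ((s : ℂ) * E)).re = ri^2 * (s * Real.cos ν) := by
      rw [show ((ri^2 : ℝ) : ℂ) * ((s : ℂ) * E) = (((ri^2) * s : ℝ) : ℂ) * E by
        push_cast; ring, Complex.re_ofReal_mul, hEre]
      ring
    have hn3 : ‖(1 - Complex.exp (-((ri^2 : ℝ) : ℂ) * ((s : ℂ) * E))) ^ M‖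
        ≤ (ri^2 * s) ^ M := by
      rw [norm_pow]
      apply pow_le_pow_left₀ (norm_nonneg _)
      have h := norm_one_sub_exp_neg_le (((ri^2 : ℝ) : ℂ) * ((s : ℂ) * E)) (by
        rw [hvre]; positivity)
      rw [neg_mul]
      refine h.trans ?_
      rw [norm_mul, norm_mul]
      simp only [Complex.norm_real, Real.norm_eq_abs, hEabs, mul_one]
      rw [abs_of_nonneg (by positivity : (0:ℝ) ≤ ri^2), abs_of_nonneg hs0.le]
    have hn4 : ‖E‖ = 1 := by rw [hEabs]
    calc ‖Complex.exp ((s : ℂ) * E * z) *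
        (Complex.exp (-((t^2 : ℝ) : ℂ) * ((s : ℂ) * E)) *
          (1 - Complex.exp (-((ri^2 : ℝ) : ℂ) * ((s : ℂ) * E))) ^ M * E)‖
        = ‖Complex.exp ((s : ℂ) * E * z)‖ *
          (‖Complex.exp (-((t^2 : ℝ) : ℂ) * ((s : ℂ) * E))‖ *
           ‖(1 - Complex.exp (-((ri^2 : ℝ) : ℂ) * ((s : ℂ) * E))) ^ M‖ * ‖E‖) := by
          rw [norm_mul, norm_mul, norm_mul]
      _ ≤ Real.exp (-(‖z‖ * Real.sin (ν - θ)) * s) *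
          (Real.exp (-(t^2 * Real.cos ν) * s) * (ri^2 * s) ^ M * 1) := by
          rw [hn1, hn2, hn4]
          gcongr
      _ = ri ^ (2*M) * (s ^ M * Real.exp (-(c * s))) := by
          have hee : Real.exp (-(‖z‖ * Real.sin (ν - θ)) * s) *
              Real.exp (-(t^2 * Real.cos ν) * s) = Real.exp (-(c * s)) := by
            rw [← Real.exp_add]
            congr 1
            rw [hcdef]; ring
          rw [mul_one]
          calc Real.exp (-(‖z‖ * Real.sin (ν - θ)) * s) *
              (Real.exp (-(t^2 * Real.cos ν) * s) * (ri^2 * s) ^ M)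
              = (Real.exp (-(‖z‖ * Real.sin (ν - θ)) * s) *
                Real.exp (-(t^2 * Real.cos ν) * s)) * ((ri^2) ^ M * s ^ M) := by
                rw [mul_pow]; ring
            _ = ri ^ (2*M) * (s ^ M * Real.exp (-(c * s))) := by
                rw [hee, ← pow_mul]; ring
  -- apply the integral bound
  have hg : IntegrableOn (fun s : ℝ => ri ^ (2*M) * (s ^ M * Real.exp (-(c * s)))) (Ioi 0) :=
    (integrableOn_pow_mul_exp_neg M hc).const_mul _
  have hae : ∀ᵐ (s : ℝ) ∂(volume.restrict (Ioi (0:ℝ))),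
      ‖Complex.exp ((s : ℂ) * E * z) *
        (Complex.exp (-((t^2 : ℝ) : ℂ) * ((s : ℂ) * E)) *
          (1 - Complex.exp (-((ri^2 : ℝ) : ℂ) * ((s : ℂ) * E))) ^ M * E)‖
      ≤ ri ^ (2*M) * (s ^ M * Real.exp (-(c * s))) :=
    (ae_restrict_iff' measurableSet_Ioi).mpr (Filter.Eventually.of_forall hpt)
  have hb := norm_integral_le_of_norm_le hg hae
  have hval : ∫ s in Ioi (0:ℝ), ri ^ (2*M) * (s ^ M * Real.exp (-(c * s)))
      = ri ^ (2*M) * ((M.factorial : ℝ) / c ^ (M+1)) := by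
    rw [integral_const_mul, integral_pow_mul_exp_neg M hc]
  rw [hval] at hb
  refine hb.trans ?_
  have hX : 0 < (‖z‖ + t^2) ^ (M+1) := by positivity
  have hpow : δ ^ (M+1) * (‖z‖ + t^2) ^ (M+1) ≤ c ^ (M+1) := by
    rw [← mul_pow]
    exact pow_le_pow_left₀ (by positivity) hcδ _
  calc ri ^ (2*M) * ((M.factorial : ℝ) / c ^ (M+1))
      ≤ ri ^ (2*M) * ((M.factorial : ℝ) / (δ ^ (M+1) * (‖z‖ + t^2) ^ (M+1))) := by
        gcongr
    _ = (M.factorial : ℝ) / δ ^ (M+1) * ri ^ (2*M) / (‖z‖ + t^2) ^ (M+1) := by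
        field_simp
end
end
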